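/- Exact computation of the joint record probability in an F^α-scheme above a threshold: for n > m ≥ 1, with Xc_1,...,Xc_n independent, Xc_k ~ F^{α_k}, F continuous, h = F(ℓ), s_k = α_1+...+α_k, one has P(Ic_m = Ic_n = 1, Mc_m > ℓ) = [α_m α_n/(s_n − s_m)] · [ (1 − h^{s_m})/s_m − (1 − h^{s_n})/s_n ]. -/

import Mathlib

open MeasureTheory ProbabilityTheory Filter Set

namespace FAProof


noncomputable def dens (a : ℝ) : ℝ → ENNReal :=
  fun t => (Ioo (0:ℝ) 1).indicator (fun t => ENNReal.ofReal (a * t ^ (a-1))) t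

lemma dens_measurable (a : ℝ) : Measurable (dens a) := by
  unfold dens
  apply Measurable.indicator _ measurableSet_Ioo
  apply Measurable.ennreal_ofReal
  measurability

lemma lint_Ioc {a c : ℝ} (ha : 0 < a) (hc : 0 ≤ c) :
    ∫⁻ t in Ioc (0:ℝ) c, ENNReal.ofReal (a * t ^ (a-1)) = ENNReal.ofReal (c ^ a) := by
  have hint : IntegrableOn (fun t : ℝ => a * t ^ (a-1)) (Ioc 0 c) := by
    have := (intervalIntegral.intervalIntegrable_rpow' (a := 0) (b := c) (r := a - 1)
      (by linarith)).const_mul a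
    rwa [intervalIntegrable_iff_integrableOn_Ioc_of_le hc] at this
  have hae : 0 ≤ᶠ[ae (volume.restrict (Ioc (0:ℝ) c))] fun t => a * t ^ (a-1) := by
    filter_upwards [ae_restrict_mem measurableSet_Ioc] with t ht
    exact mul_nonneg ha.le (Real.rpow_nonneg ht.1.le _)
  rw [← ofReal_integral_eq_lintegral_ofReal hint hae]
  congr 1
  rw [← intervalIntegral.integral_of_le hc, intervalIntegral.integral_const_mul,
    integral_rpow (Or.inl (by linarith))]
  rw [Real.zero_rpow (by linarith : a - 1 + 1 ≠ 0)]
  rw [sub_add_cancel, sub_zero]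
  field_simp

lemma dens_Iic {a : ℝ} (ha : 0 < a) (u : ℝ) :
    volume.withDensity (dens a) (Iic u)
      = ENNReal.ofReal ((max (min u 1) 0) ^ a) := by
  rw [withDensity_apply _ measurableSet_Iic]
  unfold dens
  rw [lintegral_indicator measurableSet_Ioo, Measure.restrict_restrict measurableSet_Ioo]
  rcases le_or_gt u 0 with hu | hu
  · have he : Ioo (0:ℝ) 1 ∩ Iic u = ∅ := by
      ext t; simp only [mem_inter_iff, mem_Ioo, mem_Iic, mem_empty_iff_false, iff_false]
      rintro ⟨⟨h1, _⟩, h2⟩; linarith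
    rw [he]
    simp [max_eq_right (by nlinarith [min_le_left u 1] : min u 1 ≤ 0),
      Real.zero_rpow ha.ne']
  · have hsub : ∀ c : ℝ, 0 < c → c ≤ 1 → (Ioo (0:ℝ) 1 ∩ Iic c : Set ℝ) =ᵐ[volume] Ioc (0:ℝ) c := by
      intro c h0 h1
      rw [Filter.eventuallyEq_set]
      have h1' : ∀ᵐ t : ℝ, t ≠ 1 := by
        have : volume ({1} : Set ℝ) = 0 := Real.volume_singleton
        exact (ae_iff (p := fun t : ℝ => t ≠ (1:ℝ))).2 (by simpa using this)
      filter_upwards [h1'] with t ht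
      simp only [mem_inter_iff, mem_Ioo, mem_Iic, mem_Ioc]
      constructor
      · rintro ⟨⟨a1, a2⟩, a3⟩; exact ⟨a1, a3⟩
      · rintro ⟨a1, a3⟩
        exact ⟨⟨a1, lt_of_le_of_ne (a3.trans h1) ht⟩, a3⟩
    rcases le_or_gt u 1 with hu1 | hu1
    · rw [setLIntegral_congr (hsub u hu hu1), lint_Ioc ha hu.le]
      rw [min_eq_left hu1, max_eq_left hu.le]
    · have he : Ioo (0:ℝ) 1 ∩ Iic u = Ioo (0:ℝ) 1 := by
        apply inter_eq_left.2
        intro t ht; exact le_trans ht.2.le hu1.le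
      have h11 : (Ioo (0:ℝ) 1 : Set ℝ) =ᵐ[volume] Ioc (0:ℝ) 1 := by
        have := hsub 1 one_pos le_rfl
        have h2 : Ioo (0:ℝ) 1 ∩ Iic 1 = Ioo (0:ℝ) 1 :=
          inter_eq_left.2 (fun t ht => ht.2.le)
        rwa [h2] at this
      rw [he, setLIntegral_congr h11, lint_Ioc ha zero_le_one]
      rw [min_eq_right hu1.le, max_eq_left zero_le_one, Real.one_rpow]

lemma dens_singleton (a c : ℝ) : volume.withDensity (dens a) {c} = 0 := by
  rw [withDensity_apply _ (measurableSet_singleton c),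
    Measure.restrict_eq_zero.2 Real.volume_singleton, lintegral_zero_measure]

section CDF
variable {F : ℝ → ℝ} (hFmono : Monotone F) (hFcont : Continuous F)
  (hF0 : Tendsto F atBot (nhds 0)) (hF1 : Tendsto F atTop (nhds 1))

include hFmono hFcont hF0 hF1

omit hFcont hF1 in
lemma F_nonneg (x : ℝ) : 0 ≤ F x :=
  le_of_tendsto hF0 (eventually_atBot.2 ⟨x, fun y hy => hFmono hy⟩)

omit hFcont hF0 in
lemma F_le_one (x : ℝ) : F x ≤ 1 :=
  ge_of_tendsto hF1 (eventually_atTop.2 ⟨x, fun y hy => hFmono hy⟩)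

omit hF0 hF1 hFmono in
lemma meas_Iio {a : ℝ} (ha : 0 < a) (μ : Measure ℝ)
    (hIic : ∀ x, μ (Iic x) = ENNReal.ofReal (F x ^ a)) (x : ℝ) :
    μ (Iio x) = ENNReal.ofReal (F x ^ a) := by
  have hU : Iio x = ⋃ i : ℕ, Iic (x - 1/(i+1)) := by
    ext y
    simp only [mem_Iio, mem_iUnion, mem_Iic]
    constructor
    · intro hy
      obtain ⟨i, hi⟩ := exists_nat_one_div_lt (by linarith : 0 < x - y)
      exact ⟨i, by push_cast at hi ⊢; linarith⟩
    · rintro ⟨i, hi⟩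
      have : 0 < 1/((i:ℝ)+1) := by positivity
      linarith
  have hmono : Monotone fun i : ℕ => Iic (x - 1/((i:ℝ)+1)) := by
    intro i j hij
    apply Iic_subset_Iic.2
    have : 1/((j:ℝ)+1) ≤ 1/((i:ℝ)+1) := by
      apply one_div_le_one_div_of_le (by positivity) (by exact_mod_cast by omega)
    linarith
  have h1 := tendsto_measure_iUnion_atTop (μ := μ) hmono
  rw [← hU] at h1
  have h2 : Tendsto (fun i : ℕ => μ (Iic (x - 1/((i:ℝ)+1)))) atTop
      (nhds (ENNReal.ofReal (F x ^ a))) := by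
    simp_rw [hIic]
    have hx : Tendsto (fun i : ℕ => x - 1/((i:ℝ)+1)) atTop (nhds x) := by
      have := tendsto_one_div_add_atTop_nhds_zero_nat (𝕜 := ℝ)
      have := (tendsto_const_nhds (x := x) (f := atTop (α := ℕ))).sub this
      simpa using this
    have hF : Tendsto (fun i : ℕ => F (x - 1/((i:ℝ)+1))) atTop (nhds (F x)) :=
      (hFcont.tendsto x).comp hx
    have hrpow : Tendsto (fun i : ℕ => F (x - 1/((i:ℝ)+1)) ^ a) atTop (nhds (F x ^ a)) :=
      ((Real.continuousAt_rpow_const (F x) a (Or.inr ha.le)).tendsto).comp hF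
    exact (ENNReal.continuous_ofReal.tendsto _).comp hrpow
  exact tendsto_nhds_unique (by simpa [Function.comp_def] using h1) h2

omit hFmono hFcont hF0 hF1 in
include hFmono hFcont hF0 hF1 in
lemma map_F_eq {a : ℝ} (ha : 0 < a) (μ : Measure ℝ) [IsProbabilityMeasure μ]
    (hIic : ∀ x, μ (Iic x) = ENNReal.ofReal (F x ^ a)) :
    μ.map F = volume.withDensity (dens a) := by
  have hFm : Measurable F := hFcont.measurable
  haveI : IsProbabilityMeasure (μ.map F) := Measure.isProbabilityMeasure_map hFm.aemeasurable
  apply Measure.ext_of_Iic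
  intro u
  rw [Measure.map_apply hFm measurableSet_Iic, dens_Iic ha u]
  have hpre : F ⁻¹' Iic u = {y | F y ≤ u} := rfl
  rcases lt_or_ge u 0 with hu | hu
  · have he : F ⁻¹' Iic u = ∅ := by
      ext y; simp only [mem_preimage, mem_Iic, mem_empty_iff_false, iff_false, not_le]
      exact lt_of_lt_of_le hu (F_nonneg hFmono hF0 y)
    rw [he, measure_empty]
    rw [max_eq_right (by nlinarith [min_le_left u 1] : min u 1 ≤ 0), Real.zero_rpow ha.ne']
    simp
  · rcases le_or_gt 1 u with hu1 | hu1
    · have he : F ⁻¹' Iic u = univ := by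
        ext y; simp only [mem_preimage, mem_Iic, mem_univ, iff_true]
        exact le_trans (F_le_one hFmono hF1 y) hu1
      rw [he, measure_univ, min_eq_right hu1, max_eq_left zero_le_one, Real.one_rpow]
      simp
    · -- 0 ≤ u < 1
      rw [min_eq_left hu1.le, max_eq_left hu]
      by_cases hne : (F ⁻¹' Iic u).Nonempty
      · obtain ⟨y0, hy0⟩ := (hF1.eventually_const_lt hu1).exists
        have hbdd : BddAbove (F ⁻¹' Iic u) := by
          refine ⟨y0, fun y hy => ?_⟩
          simp only [mem_preimage, mem_Iic] at hy
          by_contra hlt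
          push_neg at hlt
          exact absurd (hFmono hlt.le) (by linarith)
        have hclosed : IsClosed (F ⁻¹' Iic u) := IsClosed.preimage hFcont isClosed_Iic
        set b := sSup (F ⁻¹' Iic u) with hb
        have hbmem : b ∈ F ⁻¹' Iic u := hclosed.csSup_mem hne hbdd
        have hSeq : F ⁻¹' Iic u = Iic b := by
          ext y; constructor
          · exact fun hy => le_csSup hbdd hy
          · intro hy
            exact mem_preimage.2 (le_trans (hFmono hy) hbmem)
        have hFb : F b = u := by
          apply le_antisymm hbmem
          have hx : Tendsto (fun i : ℕ => b + 1/((i:ℝ)+1)) atTop (nhds b) := by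
            have := tendsto_one_div_add_atTop_nhds_zero_nat (𝕜 := ℝ)
            have := (tendsto_const_nhds (x := b) (f := atTop (α := ℕ))).add this
            simpa using this
          have ht : Tendsto (fun i : ℕ => F (b + 1/((i:ℝ)+1))) atTop (nhds (F b)) :=
            (hFcont.tendsto b).comp hx
          apply ge_of_tendsto ht
          apply Eventually.of_forall
          intro i
          have hnm : b + 1/((i:ℝ)+1) ∉ F ⁻¹' Iic u := by
            rw [hSeq]
            simp only [mem_Iic, not_le]
            have : 0 < 1/((i:ℝ)+1) := by positivity
            linarith
          simp only [mem_preimage, mem_Iic, not_le] at hnm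
          exact hnm.le
        rw [hSeq, hIic b, hFb]
      · rw [not_nonempty_iff_eq_empty.1 hne, measure_empty]
        have hu0 : u = 0 := by
          apply le_antisymm _ hu
          apply ge_of_tendsto hF0
          apply Eventually.of_forall
          intro y
          by_contra hlt
          push_neg at hlt
          exact hne ⟨y, by simpa [mem_preimage, mem_Iic] using hlt.le⟩
        rw [hu0, Real.zero_rpow ha.ne']
        simp
end CDF


-- helper: lintegral of c * v^b over Ioo u 1
lemma lint_Ioo_rpow {b u c : ℝ} (hb : -1 < b) (h0 : 0 ≤ u) (h1 : u ≤ 1) (hc : 0 ≤ c) :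
    ∫⁻ v in Ioo u 1, ENNReal.ofReal (c * v ^ b)
      = ENNReal.ofReal (c * (1 - u ^ (b+1)) / (b+1)) := by
  have hint : IntegrableOn (fun t : ℝ => c * t ^ b) (Ioo u 1) := by
    have := (intervalIntegral.intervalIntegrable_rpow' (a := u) (b := 1) (r := b) hb).const_mul c
    rw [intervalIntegrable_iff_integrableOn_Ioc_of_le h1] at this
    exact this.mono_set Ioo_subset_Ioc_self
  have hae : 0 ≤ᶠ[ae (volume.restrict (Ioo u 1))] fun t => c * t ^ b := by
    filter_upwards [ae_restrict_mem measurableSet_Ioo] with t ht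
    exact mul_nonneg hc (Real.rpow_nonneg (le_trans h0 ht.1.le) _)
  rw [← ofReal_integral_eq_lintegral_ofReal hint hae]
  congr 1
  rw [← integral_Ioc_eq_integral_Ioo, ← intervalIntegral.integral_of_le h1,
    intervalIntegral.integral_const_mul, integral_rpow (Or.inl hb), Real.one_rpow]
  ring


lemma rpow_const_measurable (c : ℝ) : Measurable fun x : ℝ => x ^ c := by
  measurability

lemma prod_rpow_sum {x : ℝ} (hx : 0 ≤ x) (s : Finset ℕ) (f : ℕ → ℝ)
    (hf : ∀ i ∈ s, 0 < f i) : ∏ i ∈ s, x ^ f i = x ^ (∑ i ∈ s, f i) := by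
  induction s using Finset.cons_induction with
  | empty => simp
  | cons a s ha ih =>
    have h1 : 0 < f a := hf a (Finset.mem_cons_self a s)
    have h2 : 0 ≤ ∑ i ∈ s, f i :=
      Finset.sum_nonneg fun i hi => (hf i (Finset.mem_cons_of_mem hi)).le
    rw [Finset.prod_cons, Finset.sum_cons,
      Real.rpow_add' hx (by positivity), ih (fun i hi => hf i (Finset.mem_cons_of_mem hi))]


end FAProof

open FAProof in
/-- Joint record probability above a threshold in a genuine `F^α`-scheme: for
`m < n`, `h = F ℓ`, `s k = α 0 + ... + α k`,
`P(Ic m = Ic n = 1, Mc m > ℓ)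
  = (α m · α n)/(s n − s m) · ((1 − h^{s m})/s m − (1 − h^{s n})/s n)`. -/
theorem falpha_joint_record_probability
    {Ω : Type*} [MeasurableSpace Ω] (P : Measure Ω) [IsProbabilityMeasure P]
    (F : ℝ → ℝ) (hFmono : Monotone F) (hFcont : Continuous F)
    (hF0 : Tendsto F atBot (nhds 0)) (hF1 : Tendsto F atTop (nhds 1))
    (α : ℕ → ℝ) (hα : ∀ k, 0 < α k) (ℓ : ℝ)
    (X : ℕ → Ω → ℝ) (hX : ∀ k, Measurable (X k))
    (hindep : iIndepFun X P)
    (hdist : ∀ k x, (P {ω | X k ω ≤ x}).toReal = F x ^ α k)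
    (m n : ℕ) (hmn : m < n) :
    (P ({ω | ∀ j < m, X j ω < X m ω} ∩ {ω | ∀ j < n, X j ω < X n ω}
        ∩ {ω | ℓ < (Finset.range (m + 1)).sup' (by simp) fun k => X k ω})).toReal
      = α m * α n
          / ((∑ k ∈ Finset.range (n + 1), α k) - ∑ k ∈ Finset.range (m + 1), α k)
        * ((1 - F ℓ ^ (∑ k ∈ Finset.range (m + 1), α k))
              / (∑ k ∈ Finset.range (m + 1), α k)
           - (1 - F ℓ ^ (∑ k ∈ Finset.range (n + 1), α k))
              / (∑ k ∈ Finset.range (n + 1), α k)) := by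
  classical
  have hFnn : ∀ x, 0 ≤ F x := F_nonneg hFmono hF0
  have hFle1 : ∀ x, F x ≤ 1 := F_le_one hFmono hF1
  have hFm : Measurable F := hFcont.measurable
  set h := F ℓ with hh
  set Sm := ∑ k ∈ Finset.range (m + 1), α k with hSm
  set Sn := ∑ k ∈ Finset.range (n + 1), α k with hSn
  set p := ∑ k ∈ Finset.range m, α k with hp
  set q := ∑ k ∈ Finset.Ioo m n, α k with hq
  have hh0 : 0 ≤ h := hFnn ℓ
  have hh1 : h ≤ 1 := hFle1 ℓ
  have hp0 : 0 ≤ p := Finset.sum_nonneg fun i _ => (hα i).le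
  have hq0 : 0 ≤ q := Finset.sum_nonneg fun i _ => (hα i).le
  have hSm_eq : Sm = p + α m := by rw [hSm, hp, Finset.sum_range_succ]
  have hSn_eq : Sn = Sm + q + α n := by
    have h1 : ∑ k ∈ Finset.range (m+1), α k + ∑ k ∈ Finset.Ico (m+1) n, α k
        = ∑ k ∈ Finset.range n, α k := Finset.sum_range_add_sum_Ico α hmn
    rw [hSn, Finset.sum_range_succ, ← h1, Finset.Ico_add_one_left_eq_Ioo, ← hSm, ← hq]
  have hSm_pos : 0 < Sm := by rw [hSm_eq]; have := hα m; linarith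
  have hr_pos : 0 < Sn - Sm := by rw [hSn_eq]; have := hα n; linarith
  -- laws of the X j
  have hprob : ∀ j, IsProbabilityMeasure (P.map (X j)) := fun j =>
    Measure.isProbabilityMeasure_map (hX j).aemeasurable
  have hνIic : ∀ j x, (P.map (X j)) (Iic x) = ENNReal.ofReal (F x ^ α j) := by
    intro j x
    rw [Measure.map_apply (hX j) measurableSet_Iic]
    have h1 : X j ⁻¹' Iic x = {ω | X j ω ≤ x} := rfl
    rw [h1, ← hdist j x, ENNReal.ofReal_toReal (measure_ne_top P _)]
  have hνIio : ∀ j x, (P.map (X j)) (Iio x) = ENNReal.ofReal (F x ^ α j) := fun j x =>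
    meas_Iio hFcont (hα j) _ (hνIic j) x
  have hmapF : ∀ j, (P.map (X j)).map F = volume.withDensity (dens (α j)) := by
    intro j
    haveI := hprob j
    exact map_F_eq hFmono hFcont hF0 hF1 (hα j) _ (hνIic j)
  -- index setup
  have hmlt : m < n + 1 := by omega
  have hnlt : n < n + 1 := by omega
  set M : Fin (n+1) := ⟨m, hmlt⟩ with hM
  set N : Fin (n+1) := ⟨n, hnlt⟩ with hN
  have hMN : M ≠ N := by
    intro hc
    have := congrArg Fin.val hc
    simp only [hM, hN] at this
    omega
  set μF : Fin (n+1) → Measure ℝ := fun i => P.map (X i) with hμF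
  haveI : ∀ i, IsProbabilityMeasure (μF i) := fun i => hprob i
  set V : Ω → (Fin (n+1) → ℝ) := fun ω i => X i ω with hV
  have hVmeas : Measurable V :=
    measurable_pi_lambda _ fun i => hX i
  -- joint law is the product measure
  have hlaw : Measure.pi μF = P.map V := by
    refine Measure.pi_eq fun s hs => ?_
    rw [Measure.map_apply hVmeas (MeasurableSet.univ_pi hs)]
    set sets : ℕ → Set ℝ := fun j => if hj : j < n + 1 then s ⟨j, hj⟩ else univ with hsets
    have hpre : V ⁻¹' univ.pi s = ⋂ j ∈ Finset.range (n+1), X j ⁻¹' sets j := by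
      ext ω
      simp only [mem_preimage, Set.mem_pi, mem_univ, forall_true_left, Set.mem_iInter,
        Finset.mem_range, hsets]
      constructor
      · intro hall j hj
        rw [dif_pos hj]
        exact hall ⟨j, hj⟩
      · intro hall i
        have := hall i.1 i.2
        rwa [dif_pos i.2, Fin.eta] at this
    rw [hpre, hindep.measure_inter_preimage_eq_mul (Finset.range (n+1))
      (fun j hj => by
        simp only [Finset.mem_range] at hj
        simp only [hsets, dif_pos hj]
        exact hs _)]
    rw [← Fin.prod_univ_eq_prod_range (fun j => P (X j ⁻¹' sets j)) (n+1)]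
    apply Finset.prod_congr rfl
    intro i _
    rw [hμF]
    rw [Measure.map_apply (hX i) (hs i)]
    congr 1
    simp only [hsets, Fin.is_lt, dif_pos, Fin.eta]
  -- the event as a preimage
  set B : Set (Fin (n+1) → ℝ) := ({x | ℓ < x M} ∩ {x | x M < x N}) ∩
      ⋂ j : Fin (n+1), ({x | (j:ℕ) < m → x j < x M} ∩ {x | m < (j:ℕ) ∧ (j:ℕ) < n → x j < x N})
      with hB
  have hBmem : ∀ x : Fin (n+1) → ℝ, x ∈ B ↔ ((ℓ < x M ∧ x M < x N) ∧
      ∀ j : Fin (n+1), ((j:ℕ) < m → x j < x M) ∧ (m < (j:ℕ) ∧ (j:ℕ) < n → x j < x N)) := by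
    intro x
    simp only [hB, mem_inter_iff, mem_iInter, mem_setOf_eq]
  have hBmeas : MeasurableSet B := by
    rw [hB]
    apply MeasurableSet.inter
    · exact (measurableSet_lt measurable_const (measurable_pi_apply M)).inter
        (measurableSet_lt (measurable_pi_apply M) (measurable_pi_apply N))
    · apply MeasurableSet.iInter
      intro j
      apply MeasurableSet.inter
      · by_cases hj : (j:ℕ) < m
        · simp only [hj, true_implies]
          exact measurableSet_lt (measurable_pi_apply j) (measurable_pi_apply M)
        · simp only [hj, false_implies, setOf_true]
          exact MeasurableSet.univ
      · by_cases hj : m < (j:ℕ) ∧ (j:ℕ) < n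
        · simp only [hj.1, hj.2, true_and, true_implies]
          exact measurableSet_lt
            (measurable_pi_apply (X := fun _ : Fin (n+1) => ℝ) j)
            (measurable_pi_apply (X := fun _ : Fin (n+1) => ℝ) N)
        · simp only [hj, false_implies, setOf_true]
          exact MeasurableSet.univ
  have hevent : ({ω | ∀ j < m, X j ω < X m ω} ∩ {ω | ∀ j < n, X j ω < X n ω}
        ∩ {ω | ℓ < (Finset.range (m + 1)).sup' (by simp) fun k => X k ω}) = V ⁻¹' B := by
    ext ω
    rw [mem_preimage, hBmem]
    simp only [mem_inter_iff, mem_setOf_eq, hV]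
    constructor
    · rintro ⟨⟨h1, h2⟩, h3⟩
      rw [Finset.lt_sup'_iff] at h3
      obtain ⟨b, hb, hbl⟩ := h3
      simp only [Finset.mem_range] at hb
      have hbm : X b ω ≤ X m ω := by
        rcases lt_or_eq_of_le (Nat.lt_succ_iff.1 hb) with hlt | heq
        · exact (h1 b hlt).le
        · rw [heq]
      refine ⟨⟨lt_of_lt_of_le hbl hbm, h2 m hmn⟩, ?_⟩
      intro j
      constructor
      · intro hj; exact h1 j hj
      · rintro ⟨_, hj2⟩; exact h2 j hj2
    · rintro ⟨⟨h1, h2⟩, h3⟩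
      refine ⟨⟨?_, ?_⟩, ?_⟩
      · intro j hj
        have := (h3 ⟨j, by omega⟩).1 (by simpa using hj)
        simpa using this
      · intro j hj
        rcases Nat.lt_trichotomy j m with hjm | hjm | hjm
        · have := (h3 ⟨j, by omega⟩).1 (by simpa using hjm)
          simp only at this
          exact lt_trans this h2
        · subst hjm; exact h2
        · have := (h3 ⟨j, by omega⟩).2 (by simp; omega)
          simpa using this
      · rw [Finset.lt_sup'_iff]
        exact ⟨m, by simp, h1⟩
  have hMval : (M : ℕ) = m := by rw [hM]
  have hNval : (N : ℕ) = n := by rw [hN]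
  -- probability of the event via the product measure
  have hPA : P ({ω | ∀ j < m, X j ω < X m ω} ∩ {ω | ∀ j < n, X j ω < X n ω}
        ∩ {ω | ℓ < (Finset.range (m + 1)).sup' (by simp) fun k => X k ω})
      = Measure.pi μF B := by
    rw [hevent, ← Measure.map_apply hVmeas hBmeas, ← hlaw]
  -- marginalize out all coordinates except M and N
  set t : Finset (Fin (n+1)) := Finset.univ \ {M, N} with ht
  have hMt' : M ∉ t := by simp [ht]
  have hNt : N ∉ t := by simp [ht]
  have hMt : M ∉ insert N t := by simp [ht, hMN]
  have huniv : (Finset.univ : Finset (Fin (n+1))) = insert M (insert N t) := by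
    ext i
    simp only [Finset.mem_univ, Finset.mem_insert, ht, Finset.mem_sdiff, true_and,
      Finset.mem_singleton, true_iff]
    tauto
  set g : ℝ → ℝ → ENNReal := fun y1 y2 => if ℓ < y1 ∧ y1 < y2
      then ENNReal.ofReal (F y1 ^ p) * ENNReal.ofReal (F y2 ^ q) else 0 with hg
  have step1 : Measure.pi μF B = ∫⁻ y1, ∫⁻ y2, g y1 y2 ∂(μF N) ∂(μF M) := by
    have hind : Measurable (B.indicator (1 : (Fin (n+1) → ℝ) → ENNReal)) :=
      measurable_one.indicator hBmeas
    rw [← lintegral_indicator_one hBmeas,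
      lintegral_eq_lmarginal_univ (fun _ => (0:ℝ)), huniv,
      lmarginal_insert _ hind hMt]
    apply lintegral_congr
    intro y1
    rw [lmarginal_insert _ hind hNt]
    apply lintegral_congr
    intro y2
    set z := Function.update (Function.update (fun _ : Fin (n+1) => (0:ℝ)) M y1) N y2 with hz
    have hzM : z M = y1 := by
      rw [hz, Function.update_of_ne hMN, Function.update_self]
    have hzN : z N = y2 := by rw [hz, Function.update_self]
    have hupM : ∀ y : (i : t) → ℝ, Function.updateFinset z t y M = y1 := by
      intro y
      simp only [Function.updateFinset, dif_neg hMt']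
      exact hzM
    have hupN : ∀ y : (i : t) → ℝ, Function.updateFinset z t y N = y2 := by
      intro y
      simp only [Function.updateFinset, dif_neg hNt]
      exact hzN
    have hupj : ∀ (y : (i : t) → ℝ) (j : Fin (n+1)) (hj : j ∈ t),
        Function.updateFinset z t y j = y ⟨j, hj⟩ := by
      intro y j hj
      simp only [Function.updateFinset, dif_pos hj]
    by_cases hcond : ℓ < y1 ∧ y1 < y2
    · rw [hg]
      simp only [if_pos hcond]
      have hmem : ∀ y : (i : t) → ℝ,
          (Function.updateFinset z t y ∈ B ↔
            ∀ i : t, y i ∈ Iio (if ((i : Fin (n+1)) : ℕ) < m then y1 else y2)) := by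
        intro y
        rw [hBmem]
        constructor
        · rintro ⟨-, hall⟩ i
          have hit := i.2
          have h1 : (i : Fin (n+1)) ≠ M := by
            intro e; rw [e] at hit; exact hMt' hit
          have h2 : (i : Fin (n+1)) ≠ N := by
            intro e; rw [e] at hit; exact hNt hit
          have hv1 : ((i : Fin (n+1)) : ℕ) ≠ m := fun e => h1 (Fin.ext (by rw [e, hMval]))
          have hv2 : ((i : Fin (n+1)) : ℕ) ≠ n := fun e => h2 (Fin.ext (by rw [e, hNval]))
          by_cases hjm : ((i : Fin (n+1)) : ℕ) < m
          · have := (hall i).1 hjm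
            rw [hupj y _ hit, hupM y] at this
            simpa [if_pos hjm] using this
          · have hlt : m < ((i : Fin (n+1)) : ℕ) ∧ ((i : Fin (n+1)) : ℕ) < n := by
              have := (i : Fin (n+1)).isLt
              omega
            have := (hall i).2 hlt
            rw [hupj y _ hit, hupN y] at this
            simpa [if_neg hjm] using this
        · intro hy
          have hfirst : Function.updateFinset z t y M = y1 := hupM y
          have hsecond : Function.updateFinset z t y N = y2 := hupN y
          refine ⟨⟨by rw [hfirst]; exact hcond.1, by rw [hfirst, hsecond]; exact hcond.2⟩, ?_⟩
          intro j
          constructor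
          · intro hjm
            have hjt : j ∈ t := by
              simp only [ht, Finset.mem_sdiff, Finset.mem_univ, true_and, Finset.mem_insert,
                Finset.mem_singleton]
              rintro (e | e)
              · have := congrArg Fin.val e; rw [hMval] at this; omega
              · have := congrArg Fin.val e; rw [hNval] at this; omega
            have := hy ⟨j, hjt⟩
            rw [mem_Iio, if_pos hjm] at this
            rw [hupj y j hjt, hfirst]
            exact this
          · rintro ⟨hjm, hjn⟩
            have hjt : j ∈ t := by
              simp only [ht, Finset.mem_sdiff, Finset.mem_univ, true_and, Finset.mem_insert,
                Finset.mem_singleton]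
              rintro (e | e)
              · have := congrArg Fin.val e; rw [hMval] at this; omega
              · have := congrArg Fin.val e; rw [hNval] at this; omega
            have := hy ⟨j, hjt⟩
            rw [mem_Iio, if_neg (show ¬((j:ℕ) < m) by omega)] at this
            rw [hupj y j hjt, hsecond]
            exact this
      have heq : (fun y : (i : t) → ℝ =>
            B.indicator (1 : (Fin (n+1) → ℝ) → ENNReal) (Function.updateFinset z t y))
          = (univ.pi fun i : t =>
              Iio (if ((i : Fin (n+1)) : ℕ) < m then y1 else y2)).indicator 1 := by
        funext y
        by_cases hy : ∀ i : t, y i ∈ Iio (if ((i : Fin (n+1)) : ℕ) < m then y1 else y2)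
        · rw [Set.indicator_of_mem ((hmem y).2 hy), Set.indicator_of_mem (by
            rw [Set.mem_univ_pi]; exact hy)]
          rfl
        · rw [Set.indicator_of_notMem (fun hmem' => hy ((hmem y).1 hmem')),
            Set.indicator_of_notMem (by rw [Set.mem_univ_pi]; exact hy)]
      have hlm : (∫⋯∫⁻_t, B.indicator (1 : (Fin (n+1) → ℝ) → ENNReal) ∂μF) z
          = Measure.pi (fun i : t => μF i)
            (univ.pi fun i : t => Iio (if ((i : Fin (n+1)) : ℕ) < m then y1 else y2)) := by
        rw [MeasureTheory.lmarginal]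
        rw [lintegral_congr (fun y => congrFun heq y)]
        exact lintegral_indicator_one (MeasurableSet.univ_pi fun i => measurableSet_Iio)
      rw [hlm, Measure.pi_pi,
        Finset.prod_coe_sort t (fun j => μF j (Iio (if (j : ℕ) < m then y1 else y2)))]
      -- evaluate the product
      have himg : t.image Fin.val = Finset.range m ∪ Finset.Ioo m n := by
        ext j
        simp only [Finset.mem_image, Finset.mem_union, Finset.mem_range, Finset.mem_Ioo, ht,
          Finset.mem_sdiff, Finset.mem_univ, true_and, Finset.mem_insert, Finset.mem_singleton]
        constructor
        · rintro ⟨i, hi, rfl⟩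
          have h1 : i ≠ M := fun e => hi (Or.inl e)
          have h2 : i ≠ N := fun e => hi (Or.inr e)
          have hv1 : (i : ℕ) ≠ m := fun e => h1 (Fin.ext (by rw [e, hMval]))
          have hv2 : (i : ℕ) ≠ n := fun e => h2 (Fin.ext (by rw [e, hNval]))
          have := i.isLt
          omega
        · intro hj
          have hjn : j < n + 1 := by omega
          refine ⟨⟨j, hjn⟩, ?_, rfl⟩
          rintro (e | e)
          · have := congrArg Fin.val e; rw [hMval] at this; simp at this; omega
          · have := congrArg Fin.val e; rw [hNval] at this; simp at this; omega
      have hinj : ∀ a ∈ t, ∀ b ∈ t, (a : Fin (n+1)).val = b.val → a = b :=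
        fun a _ b _ e => Fin.ext e
      have h1 : ∏ k ∈ t.image Fin.val, (P.map (X k)) (Iio (if k < m then y1 else y2))
          = ∏ j ∈ t, (P.map (X (j : ℕ))) (Iio (if (j : ℕ) < m then y1 else y2)) :=
        Finset.prod_image hinj
      rw [show (∏ j ∈ t, μF j (Iio (if (j : ℕ) < m then y1 else y2)))
          = ∏ j ∈ t, (P.map (X (j : ℕ))) (Iio (if (j : ℕ) < m then y1 else y2)) from rfl,
        ← h1, himg,
        Finset.prod_union (by
          rw [Finset.disjoint_left]
          intro a ha hb
          simp only [Finset.mem_range] at ha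
          simp only [Finset.mem_Ioo] at hb
          omega)]
      have hpart1 : ∏ k ∈ Finset.range m, (P.map (X k)) (Iio (if k < m then y1 else y2))
          = ENNReal.ofReal (F y1 ^ p) := by
        rw [Finset.prod_congr rfl (fun k hk => by
          rw [if_pos (Finset.mem_range.1 hk), hνIio k y1])]
        rw [← ENNReal.ofReal_prod_of_nonneg (fun i _ => Real.rpow_nonneg (hFnn y1) _),
          prod_rpow_sum (hFnn y1) _ _ (fun i _ => hα i), hp]
      have hpart2 : ∏ k ∈ Finset.Ioo m n, (P.map (X k)) (Iio (if k < m then y1 else y2))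
          = ENNReal.ofReal (F y2 ^ q) := by
        rw [Finset.prod_congr rfl (fun k hk => by
          rw [if_neg (by
            have := Finset.mem_Ioo.1 hk
            omega), hνIio k y2])]
        rw [← ENNReal.ofReal_prod_of_nonneg (fun i _ => Real.rpow_nonneg (hFnn y2) _),
          prod_rpow_sum (hFnn y2) _ _ (fun i _ => hα i), hq]
      rw [hpart1, hpart2]
    · rw [hg]
      simp only [if_neg hcond]
      rw [MeasureTheory.lmarginal]
      have hzero : ∀ y : (i : t) → ℝ,
          B.indicator (1 : (Fin (n+1) → ℝ) → ENNReal) (Function.updateFinset z t y) = 0 := by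
        intro y
        apply Set.indicator_of_notMem
        intro hmem'
        rw [hBmem] at hmem'
        exact hcond ⟨by rw [← hupM y]; exact hmem'.1.1,
          by rw [← hupM y, ← hupN y]; exact hmem'.1.2⟩
      rw [lintegral_congr hzero, lintegral_zero]
  -- measurability of the integrands
  have hrpow_meas : ∀ c : ℝ, Measurable fun x : ℝ => x ^ c := rpow_const_measurable
  set Ψ : ℝ → ℝ → ENNReal := fun u v => if h < u ∧ u < v
      then ENNReal.ofReal (u ^ p) * ENNReal.ofReal (v ^ q) else 0 with hΨ
  have hΨmeas : Measurable (Function.uncurry Ψ) := by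
    apply Measurable.ite
    · exact (measurableSet_lt measurable_const measurable_fst).inter
        (measurableSet_lt measurable_fst measurable_snd)
    · exact (Measurable.ennreal_ofReal ((hrpow_meas p).comp measurable_fst)).mul
        (Measurable.ennreal_ofReal ((hrpow_meas q).comp measurable_snd))
    · exact measurable_const
  have hΨv : ∀ u : ℝ, Measurable (fun v => Ψ u v) := by
    intro u
    apply Measurable.ite
    · by_cases hcu : h < u
      · simp only [hcu, true_and]
        exact measurableSet_Ioi
      · simp only [hcu, false_and, setOf_false]
        exact MeasurableSet.empty
    · exact measurable_const.mul (Measurable.ennreal_ofReal (hrpow_meas q))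
    · exact measurable_const
  have hgmeas : Measurable (Function.uncurry g) := by
    apply Measurable.ite
    · exact (measurableSet_lt measurable_const measurable_fst).inter
        (measurableSet_lt measurable_fst measurable_snd)
    · exact (Measurable.ennreal_ofReal (((hrpow_meas p).comp hFm).comp measurable_fst)).mul
        (Measurable.ennreal_ofReal (((hrpow_meas q).comp hFm).comp measurable_snd))
    · exact measurable_const
  set ρ := (μF M).prod (μF N) with hρ
  have e1 : ∫⁻ y1, ∫⁻ y2, g y1 y2 ∂(μF N) ∂(μF M) = ∫⁻ z, g z.1 z.2 ∂ρ :=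
    lintegral_lintegral hgmeas.aemeasurable
  have hsing : ∀ (j : ℕ) (c : ℝ), (P.map (X j)) (F ⁻¹' {c}) = 0 := by
    intro j c
    rw [← Measure.map_apply hFm (measurableSet_singleton c), hmapF j, dens_singleton]
  have hnull1 : ρ {z : ℝ × ℝ | F z.1 = h} = 0 := by
    have hseteq : {z : ℝ × ℝ | F z.1 = h} = (F ⁻¹' {h}) ×ˢ (univ : Set ℝ) := by
      ext z; simp [Set.mem_prod]
    rw [hρ, hseteq, Measure.prod_prod]
    have : (μF M) (F ⁻¹' {h}) = 0 := hsing _ _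
    rw [this, zero_mul]
  have hDmeas : MeasurableSet {z : ℝ × ℝ | F z.1 = F z.2} :=
    measurableSet_eq_fun (hFm.comp measurable_fst) (hFm.comp measurable_snd)
  have hnull2 : ρ {z : ℝ × ℝ | F z.1 = F z.2} = 0 := by
    rw [hρ, Measure.prod_apply hDmeas]
    have hz : ∀ y1 : ℝ, (μF N) (Prod.mk y1 ⁻¹' {z : ℝ × ℝ | F z.1 = F z.2}) = 0 := by
      intro y1
      have hpre : (Prod.mk y1 ⁻¹' {z : ℝ × ℝ | F z.1 = F z.2}) = F ⁻¹' {F y1} := by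
        ext v; simp [eq_comm]
      rw [hpre]
      exact hsing _ _
    simp only [hz, lintegral_zero]
  have hae : (fun z : ℝ × ℝ => g z.1 z.2) =ᵐ[ρ] fun z => Ψ (F z.1) (F z.2) := by
    apply ae_iff.2
    apply measure_mono_null ?_ (measure_union_null hnull1 hnull2)
    intro z hz
    simp only [mem_setOf_eq] at hz
    by_contra hn
    simp only [mem_union, mem_setOf_eq] at hn
    push_neg at hn
    apply hz
    simp only [hg, hΨ]
    have hiff : (ℓ < z.1 ∧ z.1 < z.2) ↔ (h < F z.1 ∧ F z.1 < F z.2) := by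
      constructor
      · rintro ⟨h1, h2⟩
        exact ⟨lt_of_le_of_ne (by rw [hh]; exact hFmono h1.le) (Ne.symm hn.1),
          lt_of_le_of_ne (hFmono h2.le) hn.2⟩
      · rintro ⟨h1, h2⟩
        constructor
        · by_contra hc
          push_neg at hc
          exact absurd (by rw [hh] at h1 ⊢; exact hFmono hc) (not_le.2 h1)
        · by_contra hc
          push_neg at hc
          exact absurd (hFmono hc) (not_le.2 h2)
    rw [if_congr hiff rfl rfl]
  have e2 : ∫⁻ z, g z.1 z.2 ∂ρ = ∫⁻ z, Ψ (F z.1) (F z.2) ∂ρ := lintegral_congr_ae hae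
  have e3 : ∫⁻ z, Ψ (F z.1) (F z.2) ∂ρ
      = ∫⁻ y1, ∫⁻ y2, Ψ (F y1) (F y2) ∂(μF N) ∂(μF M) := by
    rw [hρ]
    exact lintegral_prod _
      ((hΨmeas.comp ((hFm.comp measurable_fst).prodMk (hFm.comp measurable_snd))).aemeasurable)
  set Wn := (μF N).map F with hWn
  set Wm := (μF M).map F with hWm
  have hWn_eq : Wn = volume.withDensity (dens (α n)) := hmapF n
  have hWm_eq : Wm = volume.withDensity (dens (α m)) := hmapF m
  haveI : IsProbabilityMeasure Wn := by
    haveI := hprob n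
    exact Measure.isProbabilityMeasure_map hFm.aemeasurable
  set Θ : ℝ → ENNReal := fun u => ∫⁻ v, Ψ u v ∂Wn with hΘ
  have hΘmeas : Measurable Θ := Measurable.lintegral_prod_right hΨmeas
  have e4 : ∫⁻ y1, ∫⁻ y2, Ψ (F y1) (F y2) ∂(μF N) ∂(μF M) = ∫⁻ u, Θ u ∂Wm := by
    rw [hWm, lintegral_map hΘmeas hFm]
    apply lintegral_congr
    intro y1
    rw [hΘ]
    simp only []
    rw [hWn, lintegral_map (hΨv (F y1)) hFm]
  -- evaluate Θ
  have hΘval : ∀ u : ℝ, 0 ≤ u → u ≤ 1 →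
      Θ u = if h < u then ENNReal.ofReal (u ^ p) *
        ENNReal.ofReal (α n * (1 - u ^ (Sn - Sm)) / (Sn - Sm)) else 0 := by
    intro u h0 h1
    rw [hΘ]
    simp only []
    by_cases hcu : h < u
    · rw [if_pos hcu, hWn_eq,
        lintegral_withDensity_eq_lintegral_mul _ (dens_measurable _) (hΨv u)]
      have hfun : ∀ v, (dens (α n) * fun v => Ψ u v) v
          = (Ioo u 1).indicator
            (fun v => ENNReal.ofReal (u ^ p) * ENNReal.ofReal (α n * v ^ (Sn - Sm - 1))) v := by
        intro v
        show dens (α n) v * Ψ u v = _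
        by_cases hv : v ∈ Ioo u 1
        · have hv0 : 0 < v := lt_of_le_of_lt h0 hv.1
          have hv01 : v ∈ Ioo (0:ℝ) 1 := ⟨hv0, hv.2⟩
          rw [Set.indicator_of_mem hv]
          have hdv : dens (α n) v = ENNReal.ofReal (α n * v ^ (α n - 1)) := by
            unfold dens
            rw [Set.indicator_of_mem hv01]
          have hΨuv : Ψ u v = ENNReal.ofReal (u ^ p) * ENNReal.ofReal (v ^ q) := by
            simp only [hΨ]
            rw [if_pos (⟨hcu, hv.1⟩ : h < u ∧ u < v)]
          rw [hdv, hΨuv,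
            ← ENNReal.ofReal_mul (Real.rpow_nonneg h0 p),
            ← ENNReal.ofReal_mul (mul_nonneg (hα n).le (Real.rpow_nonneg hv0.le _))]
          congr 1
          have hvq : v ^ (α n - 1) * v ^ q = v ^ (Sn - Sm - 1) := by
            rw [← Real.rpow_add hv0]
            congr 1
            rw [hSn_eq]; ring
          rw [← hvq, ← ENNReal.ofReal_mul (Real.rpow_nonneg h0 p)]
          congr 1
          ring
        · rw [Set.indicator_of_notMem hv]
          have hv' : ¬(u < v ∧ v < 1) := by simpa [mem_Ioo] using hv
          rcases not_and_or.1 hv' with hv1 | hv2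
          · have hΨ0 : Ψ u v = 0 := by
              simp only [hΨ]
              rw [if_neg (fun hc => hv1 hc.2)]
            rw [hΨ0, mul_zero]
          · have hd0 : dens (α n) v = 0 := by
              unfold dens
              exact Set.indicator_of_notMem (fun hc => hv2 hc.2) _
            rw [hd0, zero_mul]
      rw [lintegral_congr hfun, lintegral_indicator measurableSet_Ioo,
        lintegral_const_mul _ (Measurable.ennreal_ofReal ((hrpow_meas _).const_mul (α n))),
        lint_Ioo_rpow (by linarith) h0 h1 (hα n).le]
      congr 2
      rw [sub_add_cancel]
    · rw [if_neg hcu]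
      have : ∀ v : ℝ, Ψ u v = 0 := by
        intro v
        rw [hΨ]
        simp only [hcu, false_and, if_false]
      simp only [this, lintegral_zero]
  -- final computation
  set C := α m * α n / (Sn - Sm) with hC
  have hCnn : 0 ≤ C :=
    div_nonneg (mul_nonneg (hα m).le (hα n).le) hr_pos.le
  have e5 : ∫⁻ u, Θ u ∂Wm
      = ENNReal.ofReal (∫ u in Ioo h 1, C * (u ^ (Sm - 1) - u ^ (Sn - 1))) := by
    rw [hWm_eq, lintegral_withDensity_eq_lintegral_mul _ (dens_measurable _) hΘmeas]
    have hfun : ∀ u, (dens (α m) * Θ) u = (Ioo h 1).indicator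
        (fun u => ENNReal.ofReal (C * (u ^ (Sm - 1) - u ^ (Sn - 1)))) u := by
      intro u
      show dens (α m) u * Θ u = _
      by_cases hu : u ∈ Ioo h 1
      · have h0u : 0 < u := lt_of_le_of_lt hh0 hu.1
        have hu1 : u < 1 := hu.2
        have hu01 : u ∈ Ioo (0:ℝ) 1 := ⟨h0u, hu1⟩
        rw [Set.indicator_of_mem hu]
        have hdu : dens (α m) u = ENNReal.ofReal (α m * u ^ (α m - 1)) := by
          unfold dens
          rw [Set.indicator_of_mem hu01]
        rw [hdu, hΘval u h0u.le hu1.le, if_pos hu.1,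
          ← ENNReal.ofReal_mul (Real.rpow_nonneg h0u.le p),
          ← ENNReal.ofReal_mul (mul_nonneg (hα m).le (Real.rpow_nonneg h0u.le _))]
        congr 1
        have e1' : u ^ (α m - 1) * u ^ p = u ^ (Sm - 1) := by
          rw [← Real.rpow_add h0u]; congr 1; rw [hSm_eq]; ring
        have e2' : u ^ (Sm - 1) * u ^ (Sn - Sm) = u ^ (Sn - 1) := by
          rw [← Real.rpow_add h0u]; congr 1; ring
        calc α m * u ^ (α m - 1) * (u ^ p * (α n * (1 - u ^ (Sn - Sm)) / (Sn - Sm)))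
            = (α m * α n / (Sn - Sm)) * ((u ^ (α m - 1) * u ^ p) * (1 - u ^ (Sn - Sm))) := by
              ring
          _ = (α m * α n / (Sn - Sm)) * (u ^ (Sm - 1) * (1 - u ^ (Sn - Sm))) := by rw [e1']
          _ = (α m * α n / (Sn - Sm)) * (u ^ (Sm - 1) - u ^ (Sm - 1) * u ^ (Sn - Sm)) := by
              ring
          _ = (α m * α n / (Sn - Sm)) * (u ^ (Sm - 1) - u ^ (Sn - 1)) := by rw [e2']
          _ = C * (u ^ (Sm - 1) - u ^ (Sn - 1)) := by rw [hC]
      · rw [Set.indicator_of_notMem hu]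
        by_cases hu01 : u ∈ Ioo (0:ℝ) 1
        · have hnh : ¬ h < u := by
            intro hc
            exact hu ⟨hc, hu01.2⟩
          rw [hΘval u hu01.1.le hu01.2.le, if_neg hnh, mul_zero]
        · unfold dens
          rw [Set.indicator_of_notMem hu01, zero_mul]
    rw [lintegral_congr hfun, lintegral_indicator measurableSet_Ioo]
    have hint : IntegrableOn (fun u : ℝ => C * (u ^ (Sm - 1) - u ^ (Sn - 1))) (Ioo h 1) := by
      have h1 := intervalIntegral.intervalIntegrable_rpow'
        (a := h) (b := 1) (r := Sm - 1) (by linarith)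
      have h2 := intervalIntegral.intervalIntegrable_rpow'
        (a := h) (b := 1) (r := Sn - 1) (by linarith)
      have h3 := (h1.sub h2).const_mul C
      rw [intervalIntegrable_iff_integrableOn_Ioc_of_le hh1] at h3
      exact h3.mono_set Ioo_subset_Ioc_self
    have haeR : 0 ≤ᶠ[ae (volume.restrict (Ioo h 1))]
        fun u : ℝ => C * (u ^ (Sm - 1) - u ^ (Sn - 1)) := by
      filter_upwards [ae_restrict_mem measurableSet_Ioo] with u hu
      have h0u : 0 < u := lt_of_le_of_lt hh0 hu.1
      have : u ^ (Sn - 1) ≤ u ^ (Sm - 1) :=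
        Real.rpow_le_rpow_of_exponent_ge h0u hu.2.le (by linarith)
      have : 0 ≤ u ^ (Sm - 1) - u ^ (Sn - 1) := by linarith
      positivity
    rw [← ofReal_integral_eq_lintegral_ofReal hint haeR]
  have hRnn : 0 ≤ ∫ u in Ioo h 1, C * (u ^ (Sm - 1) - u ^ (Sn - 1)) := by
    apply integral_nonneg_of_ae
    filter_upwards [ae_restrict_mem measurableSet_Ioo] with u hu
    have h0u : 0 < u := lt_of_le_of_lt hh0 hu.1
    have : u ^ (Sn - 1) ≤ u ^ (Sm - 1) :=
      Real.rpow_le_rpow_of_exponent_ge h0u hu.2.le (by linarith)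
    have : 0 ≤ u ^ (Sm - 1) - u ^ (Sn - 1) := by linarith
    positivity
  have hR : ∫ u in Ioo h 1, C * (u ^ (Sm - 1) - u ^ (Sn - 1))
      = C * ((1 - h ^ Sm) / Sm - (1 - h ^ Sn) / Sn) := by
    rw [← integral_Ioc_eq_integral_Ioo, ← intervalIntegral.integral_of_le hh1,
      intervalIntegral.integral_const_mul,
      intervalIntegral.integral_sub
        (intervalIntegral.intervalIntegrable_rpow' (by linarith))
        (intervalIntegral.intervalIntegrable_rpow' (by linarith)),
      integral_rpow (Or.inl (by linarith : (-1:ℝ) < Sm - 1)),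
      integral_rpow (Or.inl (by linarith : (-1:ℝ) < Sn - 1))]
    have hSm1 : Sm - 1 + 1 = Sm := by ring
    have hSn1 : Sn - 1 + 1 = Sn := by ring
    rw [hSm1, hSn1, Real.one_rpow]
    field_simp
    rw [Real.one_rpow]
  rw [hPA, step1, e1, e2, e3, e4, e5, ENNReal.toReal_ofReal hRnn, hR]
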